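/- Let t₀ ∈ ℝ, T ∈ (t₀, ∞], h > 0, b > 0, and let g be a nonnegative locally integrable function on ℝ satisfying (1/h)∫_t^{t+h} g(s) ds ≤ b for all t ∈ (t₀, T). Then for any a > 0 and all t ∈ [t₀, T): ∫_{t₀}^t e^{−a(t−s)} g(s) ds ≤ bh/(1 − e^{−ah}). -/
import Mathlib


open MeasureTheory intervalIntegral

theorem exp_weighted_integral_bound (t₀ : ℝ) (T : EReal) (hT : (t₀ : EReal) < T)
    (h b : ℝ) (hh : 0 < h) (hb : 0 < b) (g : ℝ → ℝ)
    (hg0 : ∀ s : ℝ, 0 ≤ g s) (hgloc : LocallyIntegrable g volume)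
    (havg : ∀ t : ℝ, t₀ < t → (t : EReal) < T →
      (1 / h) * ∫ s in t..(t + h), g s ≤ b)
    (a : ℝ) (ha : 0 < a) :
    ∀ t : ℝ, t₀ ≤ t → (t : EReal) < T →
      ∫ s in t₀..t, Real.exp (-a * (t - s)) * g s ≤ b * h / (1 - Real.exp (-a * h)) := by
  set E : ℝ := Real.exp (-a * h) with hE
  have hE1 : E < 1 := by
    rw [hE, show (1:ℝ) = Real.exp 0 by simp]
    exact Real.exp_lt_exp.mpr (by nlinarith)
  have hE0 : 0 < E := Real.exp_pos _
  have hden : 0 < 1 - E := by linarith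
  set B : ℝ := b * h / (1 - E) with hB
  have hBpos : 0 < B := div_pos (by positivity) hden
  have hInt : ∀ u v : ℝ, IntervalIntegrable g volume u v := fun u v =>
    (hgloc.integrableOn_isCompact isCompact_uIcc).intervalIntegrable
  have hIntE : ∀ t u v : ℝ,
      IntervalIntegrable (fun s => Real.exp (-a * (t - s)) * g s) volume u v := by
    intro t u v
    have : IntervalIntegrable (fun s => Real.exp (-a * (t - s)) * g s) volume u v :=
      IntervalIntegrable.continuousOn_mul (hInt u v)
        ((Real.continuous_exp.comp (by continuity)).continuousOn)
    exact this
  have hexple : ∀ t s : ℝ, s ≤ t → Real.exp (-a * (t - s)) * g s ≤ g s := by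
    intro t s hst
    have h1 : Real.exp (-a * (t - s)) ≤ 1 := by
      rw [show (1:ℝ) = Real.exp 0 by simp]
      exact Real.exp_le_exp.mpr (by nlinarith)
    have := hg0 s
    nlinarith
  -- window bound, including at c = t₀ by continuity
  have hwin : ∀ c : ℝ, t₀ ≤ c → (c : EReal) < T → ∫ s in c..(c + h), g s ≤ b * h := by
    have hopen : ∀ c : ℝ, t₀ < c → (c : EReal) < T → ∫ s in c..(c + h), g s ≤ b * h := by
      intro c hc hcT
      have := havg c hc hcT
      rw [one_div, inv_mul_le_iff₀ hh] at this
      linarith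
    intro c hc hcT
    rcases lt_or_eq_of_le hc with hlt | heq
    · exact hopen c hlt hcT
    · subst heq
      obtain ⟨x, hx1, hx2⟩ := EReal.lt_iff_exists_real_btwn.mp hT
      have hx1' : t₀ < x := by exact_mod_cast hx1
      set F : ℝ → ℝ := fun u => ∫ s in t₀..u, g s with hF
      have hFc : Continuous F := intervalIntegral.continuous_primitive (fun u v => hInt u v) t₀
      have hcont : Continuous fun u => F (u + h) - F u :=
        (hFc.comp (continuous_id.add continuous_const)).sub hFc
      have hten : Filter.Tendsto (fun u => F (u + h) - F u) (nhdsWithin t₀ (Set.Ioi t₀))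
          (nhds (F (t₀ + h) - F t₀)) :=
        (hcont.tendsto t₀).mono_left nhdsWithin_le_nhds
      have hev : ∀ᶠ u in nhdsWithin t₀ (Set.Ioi t₀), F (u + h) - F u ≤ b * h := by
        filter_upwards [Ioo_mem_nhdsGT hx1'] with u hu
        have heq2 : F (u + h) - F u = ∫ s in u..(u + h), g s :=
          integral_interval_sub_left (hInt t₀ (u + h)) (hInt t₀ u)
        rw [heq2]
        exact hopen u hu.1 (lt_trans (by exact_mod_cast hu.2) hx2)
      have := le_of_tendsto hten hev
      have hF0 : F t₀ = 0 := integral_same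
      have : F (t₀ + h) ≤ b * h := by linarith
      simpa [hF] using this
  -- main induction
  have key : ∀ n : ℕ, ∀ t : ℝ, t₀ ≤ t → t ≤ t₀ + n * h → (t : EReal) < T →
      ∫ s in t₀..t, Real.exp (-a * (t - s)) * g s ≤ B := by
    intro n
    induction n with
    | zero =>
      intro t ht htn htT
      have : t = t₀ := le_antisymm (by simpa using htn) ht
      subst this
      simp [hBpos.le]
    | succ n ih =>
      intro t ht htn htT
      by_cases hcase : t ≤ t₀ + n * h
      · exact ih t ht hcase htT
      push_neg at hcase
      have hbhB : b * h ≤ B := by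
        rw [hB, le_div_iff₀ hden]
        nlinarith [mul_pos hb hh, mul_pos (mul_pos hb hh) hE0]
      by_cases hn0 : t ≤ t₀ + h
      · -- one window from t₀
        have h1 : ∫ s in t₀..t, Real.exp (-a * (t - s)) * g s ≤ ∫ s in t₀..t, g s :=
          integral_mono_on ht (hIntE t t₀ t) (hInt t₀ t) (fun s hs => hexple t s hs.2)
        have hsplit : (∫ s in t₀..t, g s) + ∫ s in t..(t₀ + h), g s = ∫ s in t₀..(t₀ + h), g s :=
          integral_add_adjacent_intervals (hInt t₀ t) (hInt t (t₀ + h))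
        have h2 : 0 ≤ ∫ s in t..(t₀ + h), g s :=
          intervalIntegral.integral_nonneg hn0 (fun u _ => hg0 u)
        have h3 := hwin t₀ le_rfl hT
        linarith
      · -- inductive step: split at t - h
        push_neg at hn0
        have htm0 : t₀ ≤ t - h := by linarith
        have htmn : t - h ≤ t₀ + n * h := by push_cast at htn ⊢; linarith
        have htmT : ((t - h : ℝ) : EReal) < T :=
          lt_trans (by exact_mod_cast (by linarith : t - h < t)) htT
        have ihm := ih (t - h) htm0 htmn htmT
        have hsplit : (∫ s in t₀..(t - h), Real.exp (-a * (t - s)) * g s)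
              + ∫ s in (t - h)..t, Real.exp (-a * (t - s)) * g s
            = ∫ s in t₀..t, Real.exp (-a * (t - s)) * g s :=
          integral_add_adjacent_intervals (hIntE t t₀ (t - h)) (hIntE t (t - h) t)
        have hfirst : ∫ s in t₀..(t - h), Real.exp (-a * (t - s)) * g s
            = E * ∫ s in t₀..(t - h), Real.exp (-a * (t - h - s)) * g s := by
          rw [← intervalIntegral.integral_const_mul]
          apply intervalIntegral.integral_congr
          intro s _
          simp only [hE, ← mul_assoc, ← Real.exp_add]
          ring_nf
        have hfb : E * ∫ s in t₀..(t - h), Real.exp (-a * (t - h - s)) * g s ≤ E * B :=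
          mul_le_mul_of_nonneg_left ihm hE0.le
        have hsec : ∫ s in (t - h)..t, Real.exp (-a * (t - s)) * g s
            ≤ ∫ s in (t - h)..t, g s :=
          integral_mono_on (by linarith) (hIntE t (t - h) t) (hInt (t - h) t)
            (fun s hs => hexple t s hs.2)
        have hwin2 : ∫ s in (t - h)..t, g s ≤ b * h := by
          have := hwin (t - h) htm0 htmT
          rwa [show t - h + h = t by ring] at this
        have hsum : E * B + b * h = B := by
          rw [hB]; field_simp; ring
        linarith
  intro t ht htT
  obtain ⟨n, hn⟩ := exists_nat_ge ((t - t₀) / h)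
  have : t ≤ t₀ + n * h := by
    rw [div_le_iff₀ hh] at hn; linarith
  exact key n t ht this htT
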